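/- For every integer k ≥ 2 and every integer m ≥ 0, the truncation error of the accelerated series for ζ(k) satisfies (ln 2 − 1/2)/(2^{m+1}(m+1)) ≤ | ζ(k) − (2^{k−1}/(2^{k−1}−1)) · ∑_{n=0}^{m} H_{n+1}^{(k−1)}/(2^{n+1}(n+1)) | ≤ 1/2^{m}. -/

import Mathlib

/-- The generalized harmonic numbers: `genH k n = H_n^{(k)}`, defined by `H_n^{(0)} = 1`
and `H_n^{(k)} = ∑_{j=1}^{n} H_j^{(k−1)}/j` for `k ≥ 1`. -/
noncomputable def genH : ℕ → ℕ → ℝ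
  | 0, _ => 1
  | (k+1), n => ∑ j ∈ Finset.Icc 1 n, genH k j / (j : ℝ)


lemma genH_zero_eq (n : ℕ) : genH 0 n = 1 := rfl
lemma genH_succ_eq (k n : ℕ) : genH (k+1) n = ∑ j ∈ Finset.Icc 1 n, genH k j / (j : ℝ) := rfl

lemma genH_nonneg (k n : ℕ) : 0 ≤ genH k n := by
  induction k generalizing n with
  | zero => rw [genH_zero_eq]; norm_num
  | succ k ih =>
    rw [genH_succ_eq]
    exact Finset.sum_nonneg fun j _ => div_nonneg (ih j) (Nat.cast_nonneg j)

lemma genH_one_eq (k : ℕ) : genH k 1 = 1 := by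
  induction k with
  | zero => rfl
  | succ k ih => rw [genH_succ_eq]; simp [ih]

lemma one_le_genH (k : ℕ) {n : ℕ} (hn : 1 ≤ n) : 1 ≤ genH k n := by
  induction k with
  | zero => exact le_of_eq (genH_zero_eq n).symm
  | succ k ih =>
    rw [genH_succ_eq]
    have h1 : (1:ℕ) ∈ Finset.Icc 1 n := by simp [hn]
    have := Finset.single_le_sum (f := fun j : ℕ => genH k j / (j:ℝ))
      (fun j _ => div_nonneg (genH_nonneg k j) (Nat.cast_nonneg j)) h1
    simpa [genH_one_eq] using this

lemma genH_le_succ (k : ℕ) : ∀ {n : ℕ}, 1 ≤ n → genH k n ≤ genH (k+1) n := by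
  induction k with
  | zero => intro n hn; rw [genH_zero_eq]; exact one_le_genH 1 hn
  | succ k ih =>
    intro n hn
    rw [genH_succ_eq, genH_succ_eq]
    refine Finset.sum_le_sum fun j hj => ?_
    have hj1 : 1 ≤ j := (Finset.mem_Icc.1 hj).1
    have hjpos : (0:ℝ) < j := by exact_mod_cast hj1
    gcongr
    exact ih hj1

lemma genH_top (k n : ℕ) : genH (k+1) (n+1) = genH (k+1) n + genH k (n+1) / ((n:ℝ)+1) := by
  rw [genH_succ_eq (n := n+1), genH_succ_eq, Finset.sum_Icc_succ_top (Nat.le_add_left 1 n)]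
  push_cast; ring

lemma genH_ratio (q n : ℕ) :
    genH (q+1) (n+2) * ((n:ℝ)+1) ≤ genH (q+1) (n+1) * ((n:ℝ)+2) := by
  have h := genH_top q (n+1)
  have h' : genH (q+1) (n+2) = genH (q+1) (n+1) + genH q (n+2) / ((n:ℝ)+2) := by
    push_cast at h ⊢; convert h using 3 <;> ring
  have hm : genH q (n+2) ≤ genH (q+1) (n+2) := genH_le_succ q (by omega)
  have hpos : (0:ℝ) < (n:ℝ) + 2 := by positivity
  have h2 : genH (q+1) (n+2) * ((n:ℝ)+2)
      = genH (q+1) (n+1) * ((n:ℝ)+2) + genH q (n+2) := by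
    rw [h']; field_simp
  nlinarith [hm, h2]

noncomputable def aterm (p n : ℕ) : ℝ := genH p (n+1) / (2^(n+1) * ((n:ℝ)+1))

lemma aterm_nonneg (p n : ℕ) : 0 ≤ aterm p n :=
  div_nonneg (genH_nonneg _ _) (by positivity)

lemma aterm_succ_le (q n : ℕ) : aterm (q+1) (n+1) ≤ aterm (q+1) n / 2 := by
  unfold aterm
  rw [div_div]
  rw [div_le_div_iff₀ (by positivity) (by positivity)]
  push_cast
  have h := mul_le_mul_of_nonneg_right (genH_ratio q n) (by positivity : (0:ℝ) ≤ 2^(n+2))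
  have e2 : ((n:ℝ)+1+1) = (n:ℝ)+2 := by ring
  simp only [show n + 1 + 1 = n + 2 from rfl, e2] at *
  have hp : (2:ℝ)^(n+2) = 2^(n+1)*2 := by ring
  rw [hp] at h ⊢
  nlinarith [h]

lemma aterm_le_geo (q : ℕ) : ∀ n, aterm (q+1) n ≤ (1/2)^(n+1) := by
  intro n
  induction n with
  | zero => simp [aterm, genH_one_eq]
  | succ n ih =>
    have := aterm_succ_le q n
    have h2 : aterm (q+1) n / 2 ≤ (1/2)^(n+1) / 2 := by linarith
    calc aterm (q+1) (n+1) ≤ (1/2)^(n+1)/2 := le_trans this h2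
      _ = (1/2)^(n+1+1) := by ring

lemma summable_aterm (q : ℕ) : Summable (aterm (q+1)) := by
  refine Summable.of_nonneg_of_le (aterm_nonneg _) (aterm_le_geo q) ?_
  have := summable_geometric_two.mul_left (1/2 : ℝ)
  exact this.congr fun n => by rw [pow_succ]; ring

lemma choose_succ_div (i n : ℕ) :
    (((i+1).choose (n+1) : ℕ) : ℝ) / ((i:ℝ)+1) = ((i.choose n : ℕ) : ℝ) / ((n:ℝ)+1) := by
  rw [div_eq_div_iff (by positivity) (by positivity)]
  have hc := Nat.add_one_mul_choose_eq i n
  have hc' : ((i:ℝ)+1) * (i.choose n : ℕ) = (((i+1).choose (n+1) : ℕ) : ℝ) * ((n:ℝ)+1) := by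
    exact_mod_cast hc
  linarith [hc']

lemma keyA (p : ℕ) : ∀ N : ℕ, genH p (N+1) =
    ∑ n ∈ Finset.range (N+1), (-1:ℝ)^n * ((N+1).choose (n+1)) / ((n:ℝ)+1)^p := by
  induction p with
  | zero =>
    intro N
    rw [genH_zero_eq]
    have h := Int.alternating_sum_range_choose (n := N+1)
    rw [if_neg (Nat.succ_ne_zero N)] at h
    have h2 : ∑ m ∈ Finset.range (N+2), (-1:ℝ)^m * ((N+1).choose m) = 0 := by
      exact_mod_cast h
    rw [Finset.sum_range_succ'] at h2
    have e : ∀ n ∈ Finset.range (N+1),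
        (-1:ℝ)^(n+1) * ((N+1).choose (n+1)) = -((-1)^n * ((N+1).choose (n+1))) :=
      fun n _ => by ring
    rw [Finset.sum_congr rfl e, Finset.sum_neg_distrib] at h2
    simp only [pow_zero, one_mul, Nat.choose_zero_right, Nat.cast_one] at h2
    have h3 : ∑ n ∈ Finset.range (N+1), (-1:ℝ)^n * ((N+1).choose (n+1)) = 1 := by linarith
    simp only [pow_zero, div_one]
    exact h3.symm
  | succ p ih =>
    intro N
    rw [genH_succ_eq]
    rw [show Finset.Icc 1 (N+1) = Finset.Ico 1 (N+2) from (Finset.Ico_add_one_right_eq_Icc 1 (N+1)).symm]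
    rw [Finset.sum_Ico_eq_sum_range]
    simp only [show N + 2 - 1 = N + 1 from rfl]
    have step1 : ∀ i ∈ Finset.range (N+1),
        genH p (1+i) / ((1+i : ℕ):ℝ) =
        ∑ n ∈ Finset.range (i+1), (-1:ℝ)^n * (i.choose n) / ((n:ℝ)+1)^(p+1) := by
      intro i _
      rw [show 1+i = i+1 from by omega, ih i, Finset.sum_div]
      refine Finset.sum_congr rfl fun n hn => ?_
      have hd := choose_succ_div i n
      have h1 : ((n:ℝ)+1) ≠ 0 := by positivity
      have h2 : ((i:ℝ)+1) ≠ 0 := by positivity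
      have h3 : ((n:ℝ)+1)^p ≠ 0 := by positivity
      have hcast : ((i+1 : ℕ):ℝ) = (i:ℝ)+1 := by push_cast; ring
      rw [hcast]
      rw [div_div, mul_comm (((n:ℝ)+1)^p) ((i:ℝ)+1), ← div_div, mul_div_assoc,
        mul_div_assoc, hd, pow_succ]
      rw [div_div]
      ring
    rw [Finset.sum_congr rfl step1]
    rw [Finset.sum_comm' (t' := Finset.range (N+1)) (s' := fun n => Finset.Icc n N)
      (fun i n => by simp only [Finset.mem_range, Finset.mem_Icc]; omega)]
    refine Finset.sum_congr rfl fun n hn => ?_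
    have hs : ∑ i ∈ Finset.Icc n N, ((i.choose n : ℕ) : ℝ) = (((N+1).choose (n+1) : ℕ) : ℝ) := by
      rw [← Nat.cast_sum, Nat.sum_Icc_choose]
    calc ∑ i ∈ Finset.Icc n N, (-1:ℝ)^n * (i.choose n) / ((n:ℝ)+1)^(p+1)
        = (∑ i ∈ Finset.Icc n N, ((i.choose n : ℕ):ℝ)) * ((-1)^n / ((n:ℝ)+1)^(p+1)) := by
          rw [Finset.sum_mul]; exact Finset.sum_congr rfl fun i _ => by ring
      _ = (((N+1).choose (n+1) : ℕ):ℝ) * ((-1)^n / ((n:ℝ)+1)^(p+1)) := by rw [hs]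
      _ = (-1:ℝ)^n * ((N+1).choose (n+1)) / ((n:ℝ)+1)^(p+1) := by ring

lemma keyB (p N : ℕ) : aterm p N =
    ∑ n ∈ Finset.range (N+1), (-1:ℝ)^n * (N.choose n) / (((n:ℝ)+1)^(p+1) * 2^(N+1)) := by
  unfold aterm
  rw [keyA p N, Finset.sum_div]
  refine Finset.sum_congr rfl fun n hn => ?_
  have hd := choose_succ_div N n
  have h1 : ((n:ℝ)+1) ≠ 0 := by positivity
  have h2 : ((N:ℝ)+1) ≠ 0 := by positivity
  rw [div_div, mul_comm ((2:ℝ)^(N+1)) ((N:ℝ)+1), ← mul_assoc]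
  rw [mul_comm (((n:ℝ)+1)^p) ((N:ℝ)+1)]
  rw [show ((n:ℝ)+1)^(p+1) * 2^(N+1) = ((n:ℝ)+1) * ((n:ℝ)+1)^p * 2^(N+1) from by ring]
  field_simp
  field_simp at hd
  linear_combination hd

section Analytic

variable (p : ℕ)

/-- the double-series term -/
noncomputable def gg (p : ℕ) (q : ℕ × ℕ) : ℝ :=
  (-1)^q.1 * (((q.1+q.2).choose q.1 : ℕ) : ℝ) / (((q.1:ℝ)+1)^(p+1) * 2^(q.1+q.2+1))

lemma gg_rowsum (i : ℕ) :
    HasSum (fun j : ℕ => gg p (i, j)) ((-1)^i / ((i:ℝ)+1)^(p+1)) := by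
  have h := hasSum_choose_mul_geometric_of_norm_lt_one (𝕜 := ℝ) i (r := 1/2)
    (by rw [Real.norm_eq_abs, abs_of_nonneg (by norm_num : (0:ℝ) ≤ 1/2)]; norm_num)
  have h2 := (h.div_const ((2:ℝ)^(i+1))).mul_left ((-1)^i / ((i:ℝ)+1)^(p+1))
  have hv : (-1:ℝ)^i / ((i:ℝ)+1)^(p+1) * (1 / (1 - 1/2) ^ (i+1) / 2^(i+1))
      = (-1)^i / ((i:ℝ)+1)^(p+1) := by
    rw [show (1:ℝ) - 1/2 = 1/2 from by norm_num]
    rw [div_pow, one_pow, one_div_one_div]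
    field_simp
  rw [hv] at h2
  refine h2.congr_fun fun j => ?_
  unfold gg
  simp only
  rw [Nat.add_comm j i] at *
  rw [div_pow, one_pow]
  have h2pos : ((2:ℝ)^j) ≠ 0 := by positivity
  field_simp
  try ring
  try tauto

lemma gg_rowsum_abs (i : ℕ) :
    HasSum (fun j : ℕ => |gg p (i, j)|) (1 / ((i:ℝ)+1)^(p+1)) := by
  have h := gg_rowsum p i
  have habs : ∀ j, |gg p (i, j)| = (-1)^i * gg p (i, j) := by
    intro j
    unfold gg
    simp only
    rcases Nat.even_or_odd i with he | ho
    · rw [he.neg_one_pow]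
      rw [abs_of_nonneg]
      · ring
      · positivity
    · rw [ho.neg_one_pow]
      rw [abs_of_nonpos]
      · ring
      · have hc : (0:ℝ) ≤ (((i+j).choose i : ℕ) : ℝ) / (((i:ℝ)+1)^(p+1) * 2^(i+j+1)) := by
          positivity
        rw [neg_mul, one_mul, neg_div]
        exact neg_nonpos.2 hc
  have h2 := h.mul_left ((-1:ℝ)^i)
  have hv : (-1:ℝ)^i * ((-1)^i / ((i:ℝ)+1)^(p+1)) = 1 / ((i:ℝ)+1)^(p+1) := by
    rw [← mul_div_assoc, ← pow_add]
    rw [Even.neg_one_pow ⟨i, by ring⟩]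
  rw [hv] at h2
  exact h2.congr_fun fun j => (habs j)

lemma summable_inv_pow (hp : 1 ≤ p) :
    Summable (fun i : ℕ => 1 / ((i:ℝ)+1)^(p+1)) := by
  have h := Real.summable_one_div_nat_pow.2 (show 1 < p + 1 by omega)
  have h2 := (summable_nat_add_iff (f := fun n : ℕ => 1/(n:ℝ)^(p+1)) 1).2 h
  exact h2.congr fun i => by push_cast; ring

lemma summable_gg (hp : 1 ≤ p) : Summable (gg p) := by
  rw [← summable_abs_iff]
  rw [summable_prod_of_nonneg (fun q => abs_nonneg _)]
  constructor
  · exact fun i => (gg_rowsum_abs p i).summable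
  · refine (summable_inv_pow p hp).congr fun i => ?_
    exact ((gg_rowsum_abs p i).tsum_eq).symm

lemma tsum_gg_eta (hp : 1 ≤ p) :
    ∑' q : ℕ × ℕ, gg p q = ∑' i : ℕ, (-1:ℝ)^i / ((i:ℝ)+1)^(p+1) := by
  rw [Summable.tsum_prod' (summable_gg p hp) (fun i => (gg_rowsum p i).summable)]
  exact tsum_congr fun i => (gg_rowsum p i).tsum_eq

lemma tsum_gg_aterm (hp : 1 ≤ p) :
    ∑' q : ℕ × ℕ, gg p q = ∑' N : ℕ, aterm p N := by
  let e := Finset.HasAntidiagonal.sigmaAntidiagonalEquivProd (A := ℕ)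
  have hsig : Summable (fun x : (Σ n, {x // x ∈ Finset.HasAntidiagonal.antidiagonal n}) => gg p (e x)) :=
    e.summable_iff.2 (summable_gg p hp)
  have step : ∑' q : ℕ × ℕ, gg p q
      = ∑' (N : ℕ) (c : {x // x ∈ Finset.HasAntidiagonal.antidiagonal N}), gg p (e ⟨N, c⟩) := by
    rw [← Equiv.tsum_eq e (gg p)]
    exact hsig.tsum_sigma' (fun N => (hasSum_fintype _).summable)
  rw [step]
  refine tsum_congr fun N => ?_
  have h1 : ∑' c : {x // x ∈ Finset.HasAntidiagonal.antidiagonal N}, gg p (e ⟨N, c⟩) =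
      ∑ c ∈ Finset.HasAntidiagonal.antidiagonal N, gg p c := by
    exact Finset.tsum_subtype (Finset.HasAntidiagonal.antidiagonal N) (gg p)
  rw [h1, Finset.Nat.sum_antidiagonal_eq_sum_range_succ_mk]
  rw [keyB p N]
  refine Finset.sum_congr rfl fun i hi => ?_
  have hiN : i ≤ N := by simpa [Nat.lt_succ_iff] using hi
  unfold gg
  simp only
  rw [show i + (N - i) = N from by omega]

end Analytic

lemma eta_eq_zeta (p : ℕ) (hp : 1 ≤ p) :
    ∑' i : ℕ, (-1:ℝ)^i / ((i:ℝ)+1)^(p+1)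
      = (1 - 2 * (1/2)^(p+1)) * ∑' n : ℕ, 1 / ((n:ℝ)+1)^(p+1) := by
  set f : ℕ → ℝ := fun n => 1 / ((n:ℝ)+1)^(p+1) with hf_def
  have hf : Summable f := summable_inv_pow p hp
  have hfe : Summable (fun j : ℕ => f (2*j)) :=
    hf.comp_injective (fun a b hab => by omega)
  have hfo : Summable (fun j : ℕ => f (2*j+1)) :=
    hf.comp_injective (fun a b hab => by omega)
  have hEO : ∑' j : ℕ, f (2*j) + ∑' j : ℕ, f (2*j+1) = ∑' n, f n :=
    tsum_even_add_odd hfe hfo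
  have hOval : ∑' j : ℕ, f (2*j+1) = (1/2)^(p+1) * ∑' n, f n := by
    rw [← tsum_mul_left]
    refine tsum_congr fun j => ?_
    simp only [hf_def]
    have h1 : ((2*j+1 : ℕ):ℝ) + 1 = 2 * ((j:ℝ)+1) := by push_cast; ring
    rw [h1, mul_pow]
    rw [div_pow, one_pow, div_mul_div_comm, one_mul]
  set h : ℕ → ℝ := fun n => (-1:ℝ)^n * f n with hh_def
  have hh : Summable h := by
    refine Summable.of_abs ?_
    refine hf.congr fun n => ?_
    simp only [hh_def, hf_def, abs_mul, abs_pow, abs_neg, abs_one, one_pow, one_mul]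
    rw [abs_of_nonneg (by positivity : (0:ℝ) ≤ 1 / ((n:ℝ)+1)^(p+1))]
  have hhe : Summable (fun j : ℕ => h (2*j)) :=
    hh.comp_injective (fun a b hab => by omega)
  have hho : Summable (fun j : ℕ => h (2*j+1)) :=
    hh.comp_injective (fun a b hab => by omega)
  have hEOh : ∑' j : ℕ, h (2*j) + ∑' j : ℕ, h (2*j+1) = ∑' n, h n :=
    tsum_even_add_odd hhe hho
  have he1 : ∑' j : ℕ, h (2*j) = ∑' j : ℕ, f (2*j) := by
    refine tsum_congr fun j => ?_
    simp only [hh_def, pow_mul, neg_one_sq, one_pow, one_mul]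
  have ho1 : ∑' j : ℕ, h (2*j+1) = - ∑' j : ℕ, f (2*j+1) := by
    rw [← tsum_neg]
    refine tsum_congr fun j => ?_
    simp only [hh_def, pow_succ, pow_mul, neg_one_sq, one_pow, one_mul, neg_mul, neg_neg]
    ring
  have hfinal : ∑' n, h n = (1 - 2 * (1/2)^(p+1)) * ∑' n, f n := by
    rw [← hEOh, he1, ho1, hOval]
    have := hEO
    rw [hOval] at this
    linarith [this]
  rw [← hfinal]
  refine tsum_congr fun n => ?_
  simp only [hh_def, hf_def]
  ring

lemma zeta_eq (p : ℕ) (hp : 1 ≤ p) :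
    (∑' n : ℕ, 1 / ((n:ℝ)+1)^(p+1)) = 2^p/(2^p - 1) * ∑' n : ℕ, aterm p n := by
  have h1 : ∑' N : ℕ, aterm p N
      = (1 - 2 * (1/2)^(p+1)) * ∑' n : ℕ, 1 / ((n:ℝ)+1)^(p+1) := by
    rw [← tsum_gg_aterm p hp, tsum_gg_eta p hp, eta_eq_zeta p hp]
  rw [h1]
  have h2 : (2:ℝ) ≤ 2^p := by
    calc (2:ℝ) = 2^1 := (pow_one 2).symm
    _ ≤ 2^p := by exact pow_le_pow_right₀ one_le_two hp
  have h3 : (2:ℝ)^p - 1 ≠ 0 := by linarith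
  have h4 : (2:ℝ)^p ≠ 0 := by positivity
  have h5 : (1:ℝ) - 2 * (1/2)^(p+1) = (2^p - 1)/2^p := by
    rw [div_pow, one_pow]
    rw [pow_succ]
    field_simp
  rw [h5]
  field_simp

lemma genH_ge_threehalf (q m : ℕ) : (3:ℝ)/2 ≤ genH (q+1) (m+2) := by
  induction m with
  | zero =>
    have h := genH_top q 1
    rw [genH_one_eq] at h
    have h2 : (1:ℝ) ≤ genH q 2 := one_le_genH q (by omega)
    rw [h]
    push_cast
    linarith
  | succ m ih =>
    have h3 : (0:ℝ) ≤ genH q (m+2+1) / ((((m+2:ℕ)):ℝ)+1) := div_nonneg (genH_nonneg _ _) (by positivity)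
    rw [show m+1+2 = (m+2)+1 from rfl, genH_top q (m+2)]
    linarith

/-- For every integer `k ≥ 2` and every integer `m ≥ 0`, the truncation
error of the accelerated series for `ζ(k) = ∑_{n=1}^{∞} 1/n^k` satisfies
`(ln 2 − 1/2)/(2^{m+1}(m+1)) ≤ |ζ(k) − (2^{k−1}/(2^{k−1}−1))·∑_{n=0}^{m} H_{n+1}^{(k−1)}/(2^{n+1}(n+1))| ≤ 1/2^m`. -/
theorem stmt12 (k m : ℕ) (hk : 2 ≤ k) :
    (Real.log 2 - 1 / 2) / (2 ^ (m + 1) * ((m : ℝ) + 1)) ≤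
      |(∑' n : ℕ, 1 / ((n : ℝ) + 1) ^ k)
        - 2 ^ (k - 1) / (2 ^ (k - 1) - 1)
          * ∑ n ∈ Finset.range (m + 1), genH (k - 1) (n + 1) / (2 ^ (n + 1) * ((n : ℝ) + 1))| ∧
    |(∑' n : ℕ, 1 / ((n : ℝ) + 1) ^ k)
        - 2 ^ (k - 1) / (2 ^ (k - 1) - 1)
          * ∑ n ∈ Finset.range (m + 1), genH (k - 1) (n + 1) / (2 ^ (n + 1) * ((n : ℝ) + 1))|
      ≤ 1 / 2 ^ m := by
  obtain ⟨q, rfl⟩ : ∃ q, k = q + 2 := ⟨k - 2, by omega⟩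
  simp only [show q + 2 - 1 = q + 1 from rfl]
  have hP : ∑ n ∈ Finset.range (m+1), genH (q+1) (n+1) / (2^(n+1) * ((n:ℝ)+1))
      = ∑ n ∈ Finset.range (m+1), aterm (q+1) n := rfl
  rw [hP]
  set c : ℝ := 2^(q+1) / (2^(q+1) - 1) with hc_def
  set S : ℝ := ∑' (n : ℕ), aterm (q+1) n with hS_def
  set P : ℝ := ∑ n ∈ Finset.range (m+1), aterm (q+1) n with hP_def
  have hSm : Summable (aterm (q+1)) := summable_aterm q
  have hshift : Summable (fun i : ℕ => aterm (q+1) (i + (m+1))) :=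
    (summable_nat_add_iff (m+1)).2 hSm
  set T : ℝ := ∑' (i : ℕ), aterm (q+1) (i + (m+1)) with hT_def
  have hz : (∑' (n : ℕ), 1 / ((n:ℝ)+1)^(q+2)) = c * S := zeta_eq (q+1) (by omega)
  have hsplit : P + T = S := hSm.sum_add_tsum_nat_add (m+1)
  have hTnn : (0:ℝ) ≤ T := tsum_nonneg fun i => aterm_nonneg _ _
  have h2q : (2:ℝ) ≤ 2^(q+1) := by
    calc (2:ℝ) = 2^1 := (pow_one 2).symm
    _ ≤ 2^(q+1) := by exact pow_le_pow_right₀ one_le_two (by omega)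
  have hc1 : (1:ℝ) ≤ c := by
    rw [hc_def, le_div_iff₀ (by linarith)]
    linarith
  have hc2 : c ≤ 2 := by
    rw [hc_def, div_le_iff₀ (by linarith)]
    linarith
  have herr : (∑' (n : ℕ), 1 / ((n:ℝ)+1)^(q+2)) - c * P = c * T := by
    rw [hz, ← hsplit]; ring
  have habs : |(∑' (n : ℕ), 1 / ((n:ℝ)+1)^(q+2)) - c * P| = c * T := by
    rw [herr, abs_of_nonneg (mul_nonneg (by linarith) hTnn)]
  rw [habs]
  constructor
  · -- lower bound
    have hfirst : aterm (q+1) (m+1) ≤ T := by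
      have := hshift.le_tsum 0 (fun j _ => aterm_nonneg _ _)
      simpa using this
    have hat : (3:ℝ)/2 / (2^(m+2) * ((m:ℝ)+2)) ≤ aterm (q+1) (m+1) := by
      unfold aterm
      have hg := genH_ge_threehalf q m
      have hcast : ((m+1:ℕ):ℝ) + 1 = (m:ℝ) + 2 := by push_cast; ring
      rw [hcast]
      gcongr
    have hinner : (Real.log 2 - 1/2) * (2*((m:ℝ)+2)) ≤ 3/2 * ((m:ℝ)+1) := by
      have hl := Real.log_two_lt_d9
      have hm0 : (0:ℝ) ≤ (m:ℝ) := Nat.cast_nonneg m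
      nlinarith [hl, hm0]
    have hnum : (Real.log 2 - 1/2) / (2^(m+1) * ((m:ℝ)+1)) ≤ (3:ℝ)/2 / (2^(m+2)*((m:ℝ)+2)) := by
      rw [div_le_div_iff₀ (by positivity) (by positivity)]
      have hpow : (0:ℝ) < 2^(m+1) := by positivity
      have := mul_le_mul_of_nonneg_left hinner hpow.le
      rw [show (2:ℝ)^(m+2) = 2^(m+1)*2 from by ring]
      nlinarith [this]
    have hTc : T ≤ c * T := by nlinarith [mul_le_mul_of_nonneg_right hc1 hTnn]
    calc (Real.log 2 - 1/2) / (2^(m+1) * ((m:ℝ)+1))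
        ≤ (3:ℝ)/2 / (2^(m+2)*((m:ℝ)+2)) := hnum
      _ ≤ aterm (q+1) (m+1) := hat
      _ ≤ T := hfirst
      _ ≤ c * T := hTc
  · -- upper bound
    have hub : ∀ i : ℕ, aterm (q+1) (i+(m+1)) ≤ (1/2:ℝ)^(i+(m+2)) := by
      intro i
      rw [show i+(m+2) = (i+(m+1))+1 from by omega]
      exact aterm_le_geo q _
    have hgeo : Summable (fun i : ℕ => ((1:ℝ)/2)^(i+(m+2))) := by
      refine (summable_geometric_two.mul_right ((1/2:ℝ)^(m+2))).congr fun i => ?_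
      exact (pow_add _ _ _).symm
    have hT_le : T ≤ ∑' (i : ℕ), ((1:ℝ)/2)^(i+(m+2)) := Summable.tsum_le_tsum hub hshift hgeo
    have hgval : ∑' (i : ℕ), ((1:ℝ)/2)^(i+(m+2)) = (1/2:ℝ)^(m+1) := by
      have h1 : ∑' (i : ℕ), ((1:ℝ)/2)^(i+(m+2))
          = (∑' (i : ℕ), ((1:ℝ)/2)^i) * (1/2)^(m+2) := by
        rw [← tsum_mul_right]
        exact tsum_congr fun i => pow_add _ _ _
      rw [h1, tsum_geometric_two]
      ring
    rw [hgval] at hT_le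
    have hcT : c * T ≤ 2 * (1/2:ℝ)^(m+1) := by
      have h1 : c * T ≤ 2 * T := mul_le_mul_of_nonneg_right hc2 hTnn
      linarith
    calc c * T ≤ 2 * (1/2:ℝ)^(m+1) := hcT
      _ = 1 / 2^m := by rw [div_pow, one_pow]; ring
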